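/- Let Γ = (V,E) be a finite right-resolving labeled graph over a finite alphabet X and μ_p a Bernoulli measure on X^{-ω} with strictly positive letter probabilities. Then the sum over vertices v ∈ V of μ_p(F_v), where F_v is the set of left-infinite sequences ending at v, is an integer, namely min over finite words u of |V(u)|; in particular this sum is independent of the probability vector p. -/

import Mathlib

open MeasureTheory ENNReal

/-- The left-infinite sequence `w = ...x₂x₁` (with `w 0 = x₁` the rightmost letter)
ends at the vertex `v` of the `X`-labeled directed graph with edge relation `E`:
there is a left-infinite path `...e₂e₁` ending at `v` whose `i`-th edge is labeled `xᵢ`. -/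
def EndsInf {V X : Type*} (E : V → X → V → Prop) (w : ℕ → X) (v : V) : Prop :=
  ∃ p : ℕ → V, p 0 = v ∧ ∀ i : ℕ, E (p (i + 1)) (w i) (p i)

/-- The finite word `u = xₙ...x₂x₁` (encoded as the list `[x₁, x₂, ..., xₙ]`, head = rightmost
letter) ends at the vertex `v`: some finite path ending at `v` is labeled by `u`. -/
def EndsFin {V X : Type*} (E : V → X → V → Prop) (u : List X) (v : V) : Prop :=
  ∃ p : ℕ → V, p 0 = v ∧ ∀ (i : ℕ) (h : i < u.length), E (p (i + 1)) (u.get ⟨i, h⟩) (p i)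

/-- The right-infinite sequence `w = x₁x₂...` (with `w 0 = x₁` the first letter) starts at the
vertex `v`: there is a right-infinite path starting at `v` labeled by `w`. -/
def StartsInf {V X : Type*} (E : V → X → V → Prop) (w : ℕ → X) (v : V) : Prop :=
  ∃ p : ℕ → V, p 0 = v ∧ ∀ i : ℕ, E (p i) (w i) (p (i + 1))

/-- The graph is right-resolving: the outgoing edges at each vertex have distinct labels. -/
def RightResolving {V X : Type*} (E : V → X → V → Prop) : Prop :=
  ∀ v x u u', E v x u → E v x u' → u = u'

/-- The cylinder subset of `X^{-ω}` (resp. `X^ω`) of sequences whose last (resp. first)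
`u.length` letters spell the word `u`. -/
def Cyl {X : Type*} (u : List X) : Set (ℕ → X) :=
  {w | ∀ (i : ℕ) (h : i < u.length), w i = u.get ⟨i, h⟩}

lemma endsFin_append {V X : Type*} {E : V → X → V → Prop} {a b : List X} {v : V}
    (h : EndsFin E (a ++ b) v) : EndsFin E a v := by
  obtain ⟨q, h0, he⟩ := h
  refine ⟨q, h0, fun i hi => ?_⟩
  have hi' : i < (a ++ b).length := by simp; omega
  have := he i hi'
  simpa [List.get_eq_getElem, List.getElem_append_left hi] using this

lemma endsFin_nil {V X : Type*} {E : V → X → V → Prop} (v : V) : EndsFin E ([] : List X) v :=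
  ⟨fun _ => v, rfl, by simp⟩

lemma ncard_endsFin_append_le {V X : Type*} [Fintype V] {E : V → X → V → Prop}
    (hrr : RightResolving E) (a b : List X) :
    {v | EndsFin E (a ++ b) v}.ncard ≤ {v | EndsFin E b v}.ncard := by
  classical
  refine Set.ncard_le_ncard_of_injOn
    (fun v => if h : EndsFin E (a ++ b) v then h.choose a.length else v) ?_ ?_ (Set.toFinite _)
  · intro v hv
    simp only [Set.mem_setOf_eq] at hv ⊢
    rw [dif_pos hv]
    refine ⟨fun i => hv.choose (a.length + i), rfl, fun i hi => ?_⟩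
    have hi' : a.length + i < (a ++ b).length := by rw [List.length_append]; omega
    have h2 := hv.choose_spec.2 (a.length + i) hi'
    have hg : (a ++ b).get ⟨a.length + i, hi'⟩ = b.get ⟨i, hi⟩ := by
      rw [List.get_eq_getElem, List.get_eq_getElem,
        List.getElem_append_right (by omega : a.length ≤ a.length + i)]
      simp
    rw [hg] at h2
    have h3 : a.length + i + 1 = a.length + (i + 1) := by omega
    rw [h3] at h2
    exact h2
  · intro v hv v' hv' heq
    simp only [Set.mem_setOf_eq] at hv hv'
    simp only [dif_pos hv, dif_pos hv'] at heq
    have key : ∀ d, hv.choose (a.length - d) = hv'.choose (a.length - d) := by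
      intro d
      induction d with
      | zero => simpa using heq
      | succ d ih =>
        by_cases hd : d < a.length
        · have hj : a.length - (d + 1) + 1 = a.length - d := by omega
          have hlt : a.length - (d + 1) < (a ++ b).length := by rw [List.length_append]; omega
          have e1 := hv.choose_spec.2 (a.length - (d + 1)) hlt
          have e2 := hv'.choose_spec.2 (a.length - (d + 1)) hlt
          rw [hj] at e1 e2
          rw [ih] at e1
          exact hrr _ _ _ _ e1 e2
        · have h1 : a.length - (d + 1) = a.length - d := by omega
          rw [h1]; exact ih
    have h4 := key a.length
    simp only [Nat.sub_self] at h4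
    rw [hv.choose_spec.1, hv'.choose_spec.1] at h4
    exact h4

section Konig

variable {V X : Type*} [Fintype V] {E : V → X → V → Prop} {w : ℕ → X} {v : V}

/-- `f` describes the first `k+1` vertices of arbitrarily long labeled paths ending at `v`. -/
def KExt (E : V → X → V → Prop) (w : ℕ → X) (v : V) (f : ℕ → V) (k : ℕ) : Prop :=
  ∀ N, ∃ q : ℕ → V, q 0 = v ∧ (∀ i < N, E (q (i + 1)) (w i) (q i)) ∧ ∀ j ≤ k, q j = f j

lemma kext_step {f : ℕ → V} {k : ℕ} (hf : KExt E w v f k) :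
    ∃ v', KExt E w v (Function.update f (k + 1) v') (k + 1) := by
  classical
  obtain ⟨v', hv'⟩ := Finite.exists_infinite_fiber (fun N => (hf N).choose (k + 1))
  rw [Set.infinite_coe_iff] at hv'
  refine ⟨v', fun N => ?_⟩
  obtain ⟨M, hM, hNM⟩ := hv'.exists_gt N
  obtain ⟨hq0, hqe, hqa⟩ := (hf M).choose_spec
  refine ⟨(hf M).choose, hq0, fun i hi => hqe i (by omega), fun j hj => ?_⟩
  rcases Nat.lt_or_ge j (k + 1) with h | h
  · rw [Function.update_of_ne (by omega)]
    exact hqa j (by omega)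
  · have hj' : j = k + 1 := by omega
    subst hj'
    rw [Function.update_self]
    exact hM

lemma endsInf_of_forall_endsFin
    (hAll : ∀ n : ℕ, EndsFin E (List.ofFn fun i : Fin n => w i) v) :
    EndsInf E w v := by
  classical
  have base : KExt E w v (fun _ => v) 0 := by
    intro N
    obtain ⟨q, hq0, hqe⟩ := hAll N
    refine ⟨q, hq0, fun i hi => ?_, fun j hj => ?_⟩
    · have hi' : i < (List.ofFn fun i : Fin N => w i).length := by simp [hi]
      have := hqe i hi'
      simpa using this
    · interval_cases j
      exact hq0
  let S : ∀ k : ℕ, {f : ℕ → V // KExt E w v f k} := fun k =>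
    Nat.rec ⟨fun _ => v, base⟩
      (fun k ih => ⟨Function.update ih.1 (k + 1) (kext_step ih.2).choose,
        (kext_step ih.2).choose_spec⟩) k
  set P : ℕ → V := fun k => (S k).1 k with hP
  have agree : ∀ k j, j ≤ k → (S k).1 j = P j := by
    intro k
    induction k with
    | zero => intro j hj; interval_cases j; rfl
    | succ k ih =>
      intro j hj
      rcases Nat.lt_or_ge j (k + 1) with h | h
      · show Function.update (S k).1 (k + 1) _ j = P j
        rw [Function.update_of_ne (by omega)]
        exact ih j (by omega)
      · have : j = k + 1 := by omega
        subst this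
        rfl
  refine ⟨P, rfl, fun i => ?_⟩
  obtain ⟨q, hq0, hqe, hqa⟩ := (S (i + 1)).2 (i + 1)
  have e := hqe i (by omega)
  rw [hqa i (by omega), hqa (i + 1) (by omega), agree (i + 1) i (by omega),
    agree (i + 1) (i + 1) (by omega)] at e
  exact e

end Konig

lemma endsFin_of_endsInf {V X : Type*} {E : V → X → V → Prop} {w : ℕ → X} {v : V}
    (h : EndsInf E w v) (n : ℕ) : EndsFin E (List.ofFn fun i : Fin n => w i) v := by
  obtain ⟨q, h0, he⟩ := h
  refine ⟨q, h0, fun i hi => ?_⟩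
  have := he i
  simpa using this

lemma ncard_setOf_eq_card_filter {V : Type*} [Fintype V] (P : V → Prop) [DecidablePred P] :
    {v | P v}.ncard = (Finset.univ.filter P).card := by
  rw [← Set.ncard_coe_finset]
  congr 1
  ext v
  simp

lemma sInf_le_ncard_endsInf {V X : Type*} [Fintype V] {E : V → X → V → Prop} (w : ℕ → X) :
    sInf {k : ℕ | ∃ u : List X, {v | EndsFin E u v}.ncard = k} ≤ {v | EndsInf E w v}.ncard := by
  classical
  set W : ℕ → Set V := fun n => {v | EndsFin E (List.ofFn fun i : Fin n => w i) v} with hW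
  have hsucc : ∀ n, W (n + 1) ⊆ W n := by
    intro n v hv
    have heq : (List.ofFn fun i : Fin (n + 1) => w i) =
        (List.ofFn fun i : Fin n => w i) ++ [w n] := by
      rw [List.ofFn_succ']
      simp [List.concat_eq_append]
    simp only [hW, Set.mem_setOf_eq] at hv ⊢
    rw [heq] at hv
    exact endsFin_append hv
  have anti : ∀ {a b : ℕ}, a ≤ b → W b ⊆ W a := by
    intro a b hab
    induction b with
    | zero => have : a = 0 := by omega
              subst this; exact subset_rfl
    | succ b ih =>
      rcases Nat.lt_or_ge a (b + 1) with h | h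
      · exact (hsucc b).trans (ih (by omega))
      · have : a = b + 1 := by omega
        subst this; exact subset_rfl
  obtain ⟨N, hN⟩ : ∃ N, (W N).ncard = sInf (Set.range fun n => (W n).ncard) :=
    Nat.sInf_mem (Set.range_nonempty _)
  have hsub : W N ⊆ {v | EndsInf E w v} := by
    intro v hv
    apply endsInf_of_forall_endsFin
    intro n
    have : v ∈ W n := by
      rcases le_total n N with h | h
      · exact anti h hv
      · have hWn : W n = W N := by
          refine Set.eq_of_subset_of_ncard_le (anti h) ?_ (Set.toFinite _)
          rw [hN]
          exact Nat.sInf_le ⟨n, rfl⟩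
        rw [hWn]; exact hv
    exact this
  calc sInf {k : ℕ | ∃ u : List X, {v | EndsFin E u v}.ncard = k}
      ≤ (W N).ncard := Nat.sInf_le ⟨_, rfl⟩
    _ ≤ {v | EndsInf E w v}.ncard := Set.ncard_le_ncard hsub (Set.toFinite _)

/-- For a finite right-resolving labeled graph and any Bernoulli measure `μ` on `X^{-ω}` with
strictly positive letter probabilities, the sum over vertices `v` of `μ(F_v)` (where `F_v` is
the set of left-infinite sequences ending at `v`) equals the integer
`min_{u ∈ X*} |V(u)|`; in particular it does not depend on `p`. -/
theorem stmt_5 {V X : Type*} [Fintype V] [Fintype X] [Nonempty X] [MeasurableSpace X]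
    (E : V → X → V → Prop) (hrr : RightResolving E)
    (p : X → ℝ≥0∞) (hp : ∀ x, p x ≠ 0) (hp1 : ∑ x, p x = 1)
    (μ : Measure (ℕ → X)) (hμ : ∀ u : List X, μ (Cyl u) = (u.map p).prod) :
    ∑ v : V, μ {w | EndsInf E w v} =
      ((sInf {k : ℕ | ∃ u : List X, {v | EndsFin E u v}.ncard = k} : ℕ) : ℝ≥0∞) := by
  classical
  set m := sInf {k : ℕ | ∃ u : List X, {v | EndsFin E u v}.ncard = k} with hm
  have huniv : μ Set.univ = 1 := by
    have h0 := hμ []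
    have hc : Cyl ([] : List X) = Set.univ := by
      ext w; simp [Cyl]
    rw [hc] at h0
    simpa using h0
  refine le_antisymm ?_ ?_
  · -- upper bound
    have hne : {k : ℕ | ∃ u : List X, {v | EndsFin E u v}.ncard = k}.Nonempty :=
      ⟨{v | EndsFin E ([] : List X) v}.ncard, ⟨[], rfl⟩⟩
    obtain ⟨u₀, hu₀⟩ : ∃ u : List X, {v | EndsFin E u v}.ncard = m := Nat.sInf_mem hne
    set L := u₀.length with hL
    set h₀ : Fin L → X := fun i => u₀.get i with hh₀
    have hofn : List.ofFn h₀ = u₀ := List.ofFn_get u₀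
    have hcyl : ∀ {n : ℕ} (g : Fin n → X), μ (Cyl (List.ofFn g)) = ∏ i, p (g i) := by
      intro n g
      rw [hμ, List.map_ofFn, List.prod_ofFn]
      rfl
    have hsum1 : ∀ n : ℕ, ∑ g : Fin n → X, ∏ i, p (g i) = 1 := by
      intro n
      rw [← Fintype.sum_pow p n, hp1, one_pow]
    set q : ℝ≥0∞ := ∏ i, p (h₀ i) with hq
    have hq0 : q ≠ 0 := by
      rw [hq, Finset.prod_ne_zero_iff]
      exact fun i _ => hp _
    set r : ℝ≥0∞ := ∑ h ∈ Finset.univ.erase h₀, ∏ i, p (h i) with hr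
    have hqr : q + r = 1 := by
      rw [hq, hr,
        Finset.add_sum_erase Finset.univ (fun h : Fin L → X => ∏ i, p (h i)) (Finset.mem_univ h₀)]
      exact hsum1 L
    have hrlt : r < 1 := by
      have hr1 : r ≤ 1 := hqr ▸ le_add_self
      have hrtop : r ≠ ⊤ := ne_top_of_le_ne_top one_ne_top hr1
      calc r < r + q := ENNReal.lt_add_right hrtop hq0
        _ = 1 := by rw [add_comm]; exact hqr
    set S : ℕ → ℝ≥0∞ := fun n => ∑ g : Fin n → X,
      ({v | EndsFin E (List.ofFn g) v}.ncard : ℝ≥0∞) * ∏ i, p (g i) with hS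
    have part1 : ∀ n : ℕ, ∑ v : V, μ {w | EndsInf E w v} ≤ S n := by
      intro n
      have step1 : ∀ v : V, μ {w | EndsInf E w v} ≤
          ∑ g ∈ Finset.univ.filter (fun g : Fin n → X => EndsFin E (List.ofFn g) v),
            ∏ i, p (g i) := by
        intro v
        have hsub : {w | EndsInf E w v} ⊆
            ⋃ g ∈ Finset.univ.filter (fun g : Fin n → X => EndsFin E (List.ofFn g) v),
              Cyl (List.ofFn g) := by
          intro w hw
          simp only [Set.mem_iUnion, Finset.mem_filter, Finset.mem_univ, true_and, exists_prop]
          refine ⟨fun i => w i, endsFin_of_endsInf hw n, ?_⟩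
          intro i hi
          simp [Cyl, List.get_ofFn]
        calc μ {w | EndsInf E w v} ≤ μ (⋃ g ∈ Finset.univ.filter
              (fun g : Fin n → X => EndsFin E (List.ofFn g) v), Cyl (List.ofFn g)) :=
              measure_mono hsub
          _ ≤ ∑ g ∈ Finset.univ.filter (fun g : Fin n → X => EndsFin E (List.ofFn g) v),
              μ (Cyl (List.ofFn g)) := measure_biUnion_finset_le _ _
          _ = ∑ g ∈ Finset.univ.filter (fun g : Fin n → X => EndsFin E (List.ofFn g) v),
              ∏ i, p (g i) := Finset.sum_congr rfl fun g _ => hcyl g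
      calc ∑ v : V, μ {w | EndsInf E w v}
          ≤ ∑ v : V, ∑ g ∈ Finset.univ.filter (fun g : Fin n → X => EndsFin E (List.ofFn g) v),
            ∏ i, p (g i) := Finset.sum_le_sum fun v _ => step1 v
        _ = ∑ v : V, ∑ g : Fin n → X,
            if EndsFin E (List.ofFn g) v then ∏ i, p (g i) else 0 :=
            Finset.sum_congr rfl fun v _ => Finset.sum_filter _ _
        _ = ∑ g : Fin n → X, ∑ v : V,
            if EndsFin E (List.ofFn g) v then ∏ i, p (g i) else 0 := Finset.sum_comm
        _ = S n := by
            refine Finset.sum_congr rfl fun g _ => ?_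
            rw [← Finset.sum_filter, Finset.sum_const, ncard_setOf_eq_card_filter, nsmul_eq_mul]
    have hsplit : ∀ (n : ℕ) (g : Fin n → X) (h : Fin L → X),
        (List.ofFn fun i => Sum.elim g h (finSumFinEquiv.symm i)) = List.ofFn g ++ List.ofFn h := by
      intro n g h
      rw [List.ofFn_add]
      congr 1
      · exact congrArg _ (funext fun i => by
          change Sum.elim g h (finSumFinEquiv.symm (Fin.castAdd L i)) = g i; simp)
      · exact congrArg _ (funext fun i => by simp)
    have hprodsplit : ∀ (n : ℕ) (g : Fin n → X) (h : Fin L → X),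
        (∏ i, p (Sum.elim g h (finSumFinEquiv.symm i))) = (∏ i, p (g i)) * ∏ i, p (h i) := by
      intro n g h
      rw [← Equiv.prod_comp finSumFinEquiv fun i => p (Sum.elim g h (finSumFinEquiv.symm i))]
      simp [Fintype.prod_sum_type]
    have hSplit : ∀ n : ℕ, S (n + L) = ∑ g : Fin n → X, ∑ h : Fin L → X,
        ({v | EndsFin E (List.ofFn g ++ List.ofFn h) v}.ncard : ℝ≥0∞) *
          ((∏ i, p (g i)) * ∏ i, p (h i)) := by
      intro n
      have hstep : S (n + L) = ∑ gh : (Fin n → X) × (Fin L → X),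
          ({v | EndsFin E (List.ofFn gh.1 ++ List.ofFn gh.2) v}.ncard : ℝ≥0∞) *
            ((∏ i, p (gh.1 i)) * ∏ i, p (gh.2 i)) := by
        refine (Fintype.sum_equiv ((Equiv.sumArrowEquivProdArrow (Fin n) (Fin L) X).symm.trans
          (Equiv.arrowCongr finSumFinEquiv (Equiv.refl X)))
          (fun gh : (Fin n → X) × (Fin L → X) =>
            ({v | EndsFin E (List.ofFn gh.1 ++ List.ofFn gh.2) v}.ncard : ℝ≥0∞) *
              ((∏ i, p (gh.1 i)) * ∏ i, p (gh.2 i)))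
          (fun F : Fin (n + L) → X =>
            ({v | EndsFin E (List.ofFn F) v}.ncard : ℝ≥0∞) * ∏ i, p (F i)) ?_).symm
        intro gh
        have h1 : List.ofFn (((Equiv.sumArrowEquivProdArrow (Fin n) (Fin L) X).symm.trans
            (Equiv.arrowCongr finSumFinEquiv (Equiv.refl X))) gh) =
            List.ofFn gh.1 ++ List.ofFn gh.2 := hsplit n gh.1 gh.2
        have h2 : (∏ i, p ((((Equiv.sumArrowEquivProdArrow (Fin n) (Fin L) X).symm.trans
            (Equiv.arrowCongr finSumFinEquiv (Equiv.refl X))) gh) i)) =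
            (∏ i, p (gh.1 i)) * ∏ i, p (gh.2 i) := hprodsplit n gh.1 gh.2
        beta_reduce
        rw [h1, h2]
      rw [hstep, Fintype.sum_prod_type]
    have hinner : ∀ (n : ℕ) (g : Fin n → X),
        (∑ h : Fin L → X, ({v | EndsFin E (List.ofFn g ++ List.ofFn h) v}.ncard : ℝ≥0∞) *
          ((∏ i, p (g i)) * ∏ i, p (h i))) ≤
        (∏ i, p (g i)) * ((m : ℝ≥0∞) * q +
          ({v | EndsFin E (List.ofFn g) v}.ncard : ℝ≥0∞) * r) := by
      intro n g
      rw [← Finset.add_sum_erase Finset.univ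
        (fun h : Fin L → X => ({v | EndsFin E (List.ofFn g ++ List.ofFn h) v}.ncard : ℝ≥0∞) *
          ((∏ i, p (g i)) * ∏ i, p (h i))) (Finset.mem_univ h₀), mul_add]
      refine add_le_add ?_ ?_
      · have hle : ({v | EndsFin E (List.ofFn g ++ List.ofFn h₀) v}.ncard : ℝ≥0∞) ≤ (m : ℝ≥0∞) := by
          rw [hofn]
          exact_mod_cast hu₀ ▸ ncard_endsFin_append_le hrr (List.ofFn g) u₀
        calc ({v | EndsFin E (List.ofFn g ++ List.ofFn h₀) v}.ncard : ℝ≥0∞) *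
              ((∏ i, p (g i)) * ∏ i, p (h₀ i))
            ≤ (m : ℝ≥0∞) * ((∏ i, p (g i)) * ∏ i, p (h₀ i)) := mul_le_mul_left hle _
          _ = (∏ i, p (g i)) * ((m : ℝ≥0∞) * q) := by rw [hq]; ring
      · calc ∑ h ∈ Finset.univ.erase h₀,
              ({v | EndsFin E (List.ofFn g ++ List.ofFn h) v}.ncard : ℝ≥0∞) *
                ((∏ i, p (g i)) * ∏ i, p (h i))
            ≤ ∑ h ∈ Finset.univ.erase h₀,
              ({v | EndsFin E (List.ofFn g) v}.ncard : ℝ≥0∞) *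
                ((∏ i, p (g i)) * ∏ i, p (h i)) := by
              refine Finset.sum_le_sum fun h _ => mul_le_mul_left ?_ _
              have := Set.ncard_le_ncard
                (s := {v | EndsFin E (List.ofFn g ++ List.ofFn h) v})
                (t := {v | EndsFin E (List.ofFn g) v})
                (fun v hv => endsFin_append hv) (Set.toFinite _)
              exact_mod_cast this
          _ = (∏ i, p (g i)) * (({v | EndsFin E (List.ofFn g) v}.ncard : ℝ≥0∞) * r) := by
              rw [hr, Finset.mul_sum, Finset.mul_sum]
              refine Finset.sum_congr rfl fun h _ => ?_
              ring
    have part2 : ∀ k : ℕ, ∃ n : ℕ, S n ≤ (m : ℝ≥0∞) + (Fintype.card V : ℝ≥0∞) * r ^ k := by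
      intro k
      induction k with
      | zero =>
        refine ⟨0, ?_⟩
        have hS0 : S 0 ≤ (Fintype.card V : ℝ≥0∞) := by
          rw [hS]
          simp only []
          calc ∑ g : Fin 0 → X, ({v | EndsFin E (List.ofFn g) v}.ncard : ℝ≥0∞) * ∏ i, p (g i)
              ≤ ∑ g : Fin 0 → X, (Fintype.card V : ℝ≥0∞) * ∏ i, p (g i) := by
                refine Finset.sum_le_sum fun g _ => mul_le_mul_left ?_ _
                have h1 : {v | EndsFin E (List.ofFn g) v}.ncard ≤ Fintype.card V := by
                  calc {v | EndsFin E (List.ofFn g) v}.ncard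
                      ≤ (Set.univ : Set V).ncard := Set.ncard_le_ncard (Set.subset_univ _)
                        (Set.toFinite _)
                    _ = Fintype.card V := by rw [Set.ncard_univ, Nat.card_eq_fintype_card]
                exact_mod_cast h1
            _ = (Fintype.card V : ℝ≥0∞) := by
                rw [← Finset.mul_sum, hsum1 0, mul_one]
        rw [pow_zero, mul_one]
        exact hS0.trans le_add_self
      | succ k ih =>
        obtain ⟨n, hn⟩ := ih
        refine ⟨n + L, ?_⟩
        calc S (n + L) = ∑ g : Fin n → X, ∑ h : Fin L → X,
              ({v | EndsFin E (List.ofFn g ++ List.ofFn h) v}.ncard : ℝ≥0∞) *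
                ((∏ i, p (g i)) * ∏ i, p (h i)) := hSplit n
          _ ≤ ∑ g : Fin n → X, (∏ i, p (g i)) * ((m : ℝ≥0∞) * q +
              ({v | EndsFin E (List.ofFn g) v}.ncard : ℝ≥0∞) * r) :=
              Finset.sum_le_sum fun g _ => hinner n g
          _ = (m : ℝ≥0∞) * q * (∑ g : Fin n → X, ∏ i, p (g i)) + r * S n := by
              rw [hS]
              simp only []
              rw [Finset.mul_sum, Finset.mul_sum, ← Finset.sum_add_distrib]
              refine Finset.sum_congr rfl fun g _ => ?_
              ring
          _ = (m : ℝ≥0∞) * q + r * S n := by rw [hsum1 n, mul_one]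
          _ ≤ (m : ℝ≥0∞) * q + r * ((m : ℝ≥0∞) + (Fintype.card V : ℝ≥0∞) * r ^ k) := by
              exact add_le_add_right (mul_le_mul_right hn r) _
          _ = (m : ℝ≥0∞) * (q + r) + (Fintype.card V : ℝ≥0∞) * r ^ (k + 1) := by ring
          _ = (m : ℝ≥0∞) + (Fintype.card V : ℝ≥0∞) * r ^ (k + 1) := by rw [hqr, mul_one]
    have hub : ∀ k : ℕ, ∑ v : V, μ {w | EndsInf E w v} ≤
        (m : ℝ≥0∞) + (Fintype.card V : ℝ≥0∞) * r ^ k := by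
      intro k
      obtain ⟨n, hn⟩ := part2 k
      exact (part1 n).trans hn
    have htend : Filter.Tendsto (fun k : ℕ => (m : ℝ≥0∞) + (Fintype.card V : ℝ≥0∞) * r ^ k)
        Filter.atTop (nhds ((m : ℝ≥0∞) + (Fintype.card V : ℝ≥0∞) * 0)) :=
      Filter.Tendsto.const_add _ (ENNReal.Tendsto.const_mul
        (ENNReal.tendsto_pow_atTop_nhds_zero_of_lt_one hrlt) (Or.inr (ENNReal.natCast_ne_top _)))
    rw [mul_zero, add_zero] at htend
    exact ge_of_tendsto' htend hub
  · -- lower bound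
    set F : V → Set (ℕ → X) := fun v => {w | EndsInf E w v} with hF
    have key : ∀ w : ℕ → X, (m : ℝ≥0∞) ≤ ∑ v : V, (toMeasurable μ (F v)).indicator 1 w := by
      intro w
      have h1 : (m : ℝ≥0∞) ≤ ∑ v : V, (F v).indicator 1 w := by
        have h2 : ∑ v : V, (F v).indicator (1 : (ℕ → X) → ℝ≥0∞) w =
            ((Finset.univ.filter fun v => EndsInf E w v).card : ℝ≥0∞) := by
          rw [← Finset.sum_boole]
          refine Finset.sum_congr rfl fun v _ => ?_
          simp [Set.indicator_apply, hF]
        rw [h2]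
        have h3 : m ≤ (Finset.univ.filter fun v => EndsInf E w v).card := by
          rw [← ncard_setOf_eq_card_filter]
          exact sInf_le_ncard_endsInf w
        exact_mod_cast h3
      refine h1.trans (Finset.sum_le_sum fun v _ => ?_)
      exact Set.indicator_le_indicator_of_subset (subset_toMeasurable μ (F v)) (fun _ => zero_le) w
    have hmeas : ∀ v : V, Measurable ((toMeasurable μ (F v)).indicator (1 : (ℕ → X) → ℝ≥0∞)) :=
      fun v => measurable_one.indicator (measurableSet_toMeasurable μ (F v))
    calc (m : ℝ≥0∞) = (m : ℝ≥0∞) * μ Set.univ := by rw [huniv, mul_one]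
      _ = ∫⁻ _, (m : ℝ≥0∞) ∂μ := (lintegral_const _).symm
      _ ≤ ∫⁻ w, ∑ v : V, (toMeasurable μ (F v)).indicator 1 w ∂μ := lintegral_mono key
      _ = ∑ v : V, ∫⁻ w, (toMeasurable μ (F v)).indicator 1 w ∂μ :=
          lintegral_finset_sum _ (fun v _ => hmeas v)
      _ = ∑ v : V, μ (toMeasurable μ (F v)) :=
          Finset.sum_congr rfl fun v _ => lintegral_indicator_one (measurableSet_toMeasurable μ (F v))
      _ = ∑ v : V, μ (F v) := Finset.sum_congr rfl fun v _ => measure_toMeasurable (F v)
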